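/- Let n ≥ 2. There exist constants C, c > 0, depending only on n, such that for every X' ∈ ℝ^{n-1} with 1/2 ≤ |X'| ≤ 5/2 and every τ with 0 < τ ≤ 1, one has ∫_{D₃} e^{-|X'-z'|²/τ} (|z₁|/|z'|ⁿ) dz' ≤ C e^{-c/τ}, where D₃ = {z' ∈ ℝ^{n-1} : |z'| > |X'|/10 and |z' - X'| > |X'|/10}. -/

import Mathlib

open MeasureTheory Real Set

lemma my_abs_coord_le_norm {m : ℕ} (z : EuclideanSpace ℝ (Fin m)) (i : Fin m) :
    |z i| ≤ ‖z‖ := by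
  rw [EuclideanSpace.norm_eq, Real.le_sqrt (abs_nonneg _), sq_abs]
  · have h : z i ^ 2 = ‖z i‖ ^ 2 := by rw [Real.norm_eq_abs, sq_abs]
    rw [h]
    exact Finset.single_le_sum (f := fun j => ‖z j‖ ^ 2) (fun j _ => by positivity)
      (Finset.mem_univ i)
  · positivity

lemma gauss_integrable {m : ℕ} :
    Integrable (fun v : EuclideanSpace ℝ (Fin m) => rexp (-(1/2 : ℝ) * ‖v‖^2)) := by
  have h := GaussianFourier.integrable_cexp_neg_mul_sq_norm_add
    (V := EuclideanSpace ℝ (Fin m)) (b := (1/2 : ℂ)) (by norm_num) 0 (0 : EuclideanSpace ℝ (Fin m))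
  refine h.norm.congr (ae_of_all _ fun v => ?_)
  simp only [Complex.norm_exp]
  norm_num [Complex.add_re, Complex.mul_re, ← Complex.ofReal_pow, Complex.ofReal_re]

/-- Estimate of `J₃`: for `1/2 ≤ |X'| ≤ 5/2` and `0 < τ ≤ 1`,
`∫_{D₃} e^{-|X'-z'|²/τ} |z₁|/|z'|ⁿ dz' ≤ C e^{-c/τ}`, where
`D₃ = {z' : |z'| > |X'|/10, |z' - X'| > |X'|/10}`. -/
theorem stmt_6 (n : ℕ) (hn : 2 ≤ n) :
    ∃ C c : ℝ, 0 < C ∧ 0 < c ∧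
      ∀ X' : EuclideanSpace ℝ (Fin (n-1)), 1/2 ≤ ‖X'‖ → ‖X'‖ ≤ 5/2 →
        ∀ τ : ℝ, 0 < τ → τ ≤ 1 →
          IntegrableOn
            (fun z' : EuclideanSpace ℝ (Fin (n-1)) =>
              Real.exp (-‖X' - z'‖^2/τ) * (|z' ⟨0, by omega⟩| / ‖z'‖^n))
            {z' : EuclideanSpace ℝ (Fin (n-1)) |
              ‖X'‖/10 < ‖z'‖ ∧ ‖X'‖/10 < ‖z' - X'‖} volume ∧
          (∫ z' in {z' : EuclideanSpace ℝ (Fin (n-1)) |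
                ‖X'‖/10 < ‖z'‖ ∧ ‖X'‖/10 < ‖z' - X'‖},
              Real.exp (-‖X' - z'‖^2/τ) * (|z' ⟨0, by omega⟩| / ‖z'‖^n)) ≤
            C * Real.exp (-c/τ) := by
  set E := EuclideanSpace ℝ (Fin (n-1))
  set K : ℝ := ∫ v : E, rexp (-(1/2 : ℝ) * ‖v‖^2) with hK
  have hKval : K = (π / (1/2 : ℝ)) ^ ((Module.finrank ℝ E : ℝ) / 2) := by
    rw [hK, GaussianFourier.integral_rexp_neg_mul_sq_norm (by norm_num : (0:ℝ) < 1/2)]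
  have hKpos : 0 < K := by
    rw [hKval]
    have : (0:ℝ) < π / (1/2) := by positivity
    positivity
  refine ⟨(20:ℝ)^(n-1) * K, 1/800, by positivity, by norm_num, ?_⟩
  intro X' hX1 hX2 τ hτ hτ1
  set i0 : Fin (n-1) := ⟨0, by omega⟩
  set D : Set E := {z' : E | ‖X'‖/10 < ‖z'‖ ∧ ‖X'‖/10 < ‖z' - X'‖} with hDdef
  set f : E → ℝ := fun z' => Real.exp (-‖X' - z'‖^2/τ) * (|z' i0| / ‖z'‖^n) with hfdef
  set g : E → ℝ := fun z' => (20:ℝ)^(n-1) * rexp (-(1/800)/τ) * rexp (-(1/2 : ℝ) * ‖z' - X'‖^2)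
    with hgdef
  have hfnn : ∀ z : E, 0 ≤ f z := fun z =>
    mul_nonneg (Real.exp_pos _).le (div_nonneg (abs_nonneg _) (by positivity))
  -- pointwise bound on D
  have hbound : ∀ z ∈ D, f z ≤ g z := by
    intro z hz
    obtain ⟨hz1, hz2⟩ := hz
    have h20 : (1/20 : ℝ) ≤ ‖z‖ := by linarith
    have h20' : (1/20 : ℝ) ≤ ‖z - X'‖ := by linarith
    have hzpos : (0:ℝ) < ‖z‖ := by linarith
    -- bound on the algebraic factor
    have hA : |z i0| / ‖z‖^n ≤ (20:ℝ)^(n-1) := by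
      rw [div_le_iff₀ (by positivity)]
      have h1 : (1:ℝ) ≤ (20 * ‖z‖)^(n-1) := one_le_pow₀ (by linarith)
      have h2 : (20:ℝ)^(n-1) * ‖z‖^n = (20*‖z‖)^(n-1) * ‖z‖ := by
        rw [mul_pow]
        have : ‖z‖^n = ‖z‖^(n-1) * ‖z‖ := by
          rw [← pow_succ]
          congr 1
          omega
        rw [this]; ring
      calc |z i0| ≤ ‖z‖ := my_abs_coord_le_norm z i0
        _ = 1 * ‖z‖ := (one_mul _).symm
        _ ≤ (20*‖z‖)^(n-1) * ‖z‖ := by gcongr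
        _ = (20:ℝ)^(n-1) * ‖z‖^n := h2.symm
    -- bound on the exponential factor
    have hB : rexp (-‖X' - z‖^2/τ) ≤ rexp (-(1/800)/τ) * rexp (-(1/2 : ℝ) * ‖z - X'‖^2) := by
      rw [← Real.exp_add, Real.exp_le_exp, norm_sub_rev]
      have hr : (1/400 : ℝ) ≤ ‖z - X'‖^2 := by
        calc (1/400 : ℝ) = (1/20)^2 := by norm_num
          _ ≤ ‖z - X'‖^2 := by gcongr
      set r := ‖z - X'‖^2 with hrdef
      have e1 : -r/τ = -(r/(2*τ)) + -(r/(2*τ)) := by field_simp; ring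
      have b1 : -(r/(2*τ)) ≤ -(1/800)/τ := by
        have : (1/800)/τ ≤ r/(2*τ) := by
          rw [div_le_div_iff₀ hτ (by positivity)]
          nlinarith
        rw [neg_div]
        exact neg_le_neg this
      have b2 : -(r/(2*τ)) ≤ -(1/2)*r := by
        have : (1/2)*r ≤ r/(2*τ) := by
          rw [le_div_iff₀ (by positivity)]
          nlinarith
        linarith
      rw [e1]
      exact add_le_add b1 b2
    calc f z ≤ rexp (-(1/800)/τ) * rexp (-(1/2 : ℝ) * ‖z - X'‖^2) * ((20:ℝ)^(n-1)) := by
          apply mul_le_mul hB hA (div_nonneg (abs_nonneg _) (by positivity)) (by positivity)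
          
      _ = g z := by rw [hgdef]; ring
  -- measurability
  have hDmeas : MeasurableSet D := by
    rw [hDdef, Set.setOf_and]
    exact ((isOpen_lt continuous_const continuous_norm).inter
      (isOpen_lt continuous_const ((continuous_id.sub continuous_const).norm))).measurableSet
  have hfmeas : AEStronglyMeasurable f volume := by
    apply Measurable.aestronglyMeasurable
    apply Measurable.mul
    · exact (Real.continuous_exp.comp
        (((continuous_const.sub continuous_id).norm.pow 2).neg.div_const τ)).measurable
    · exact ((continuous_abs.comp (EuclideanSpace.proj i0).continuous).measurable).div
        ((continuous_norm.pow n).measurable)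
  -- integrability of the majorant
  have hgint : Integrable g volume := by
    have h1 : Integrable (fun z : E => rexp (-(1/2 : ℝ) * ‖z - X'‖^2)) volume :=
      Integrable.comp_sub_right gauss_integrable X'
    simpa [hgdef, mul_assoc] using h1.const_mul ((20:ℝ)^(n-1) * rexp (-(1/800)/τ))
  -- integrability of f on D
  have hfint : IntegrableOn f D volume := by
    refine Integrable.mono' (hgint.restrict (s := D)) (hfmeas.restrict) ?_
    rw [ae_restrict_iff' hDmeas]
    refine ae_of_all _ fun z hz => ?_
    rw [Real.norm_eq_abs, abs_of_nonneg (hfnn z)]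
    exact hbound z hz
  refine ⟨hfint, ?_⟩
  have step1 : (∫ z in D, f z) ≤ ∫ z in D, g z :=
    setIntegral_mono_on hfint (hgint.restrict) hDmeas hbound
  have step2 : (∫ z in D, g z) ≤ ∫ z, g z :=
    setIntegral_le_integral hgint (ae_of_all _ fun z => by positivity)
  have step3 : (∫ z, g z) = (20:ℝ)^(n-1) * K * rexp (-(1/800)/τ) := by
    rw [hgdef]
    rw [MeasureTheory.integral_const_mul]
    rw [integral_sub_right_eq_self (fun v : E => rexp (-(1/2 : ℝ) * ‖v‖^2)) X']
    rw [← hK]; ring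
  calc (∫ z in D, f z) ≤ ∫ z, g z := le_trans step1 step2
    _ = (20:ℝ)^(n-1) * K * rexp (-(1/800)/τ) := step3
    _ = (20:ℝ)^(n-1) * K * rexp (-(1/800)/τ) := rfl
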